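/- arXiv:1306.2595 — 2 statements merged into one kernel-verified Lean document; each statement's English description precedes it below -/
import Mathlib

section
/- For any x in (0,1], the integral from 0 to 1 of log2(x⁻¹ - z) dz equals x⁻¹·H(x) - log2(e), where H is the binary entropy function. -/
open Real MeasureTheory

noncomputable def binEnt (p : ℝ) : ℝ :=
  -(p * Real.logb 2 p) - (1 - p) * Real.logb 2 (1 - p)

lemma intervalIntegrable_log01 : IntervalIntegrable Real.log volume 0 1 := by
  rw [intervalIntegrable_iff, Set.uIoc_of_le zero_le_one]
  have hg : IntegrableOn (fun u : ℝ => 2 * u ^ (-(1/2) : ℝ)) (Set.Ioc (0:ℝ) 1) := by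
    have := (intervalIntegral.intervalIntegrable_rpow' (a := 0) (b := 1) (r := -(1/2)) (by norm_num)).const_mul 2
    rwa [intervalIntegrable_iff, Set.uIoc_of_le zero_le_one] at this
  refine hg.integrable.mono Real.measurable_log.aestronglyMeasurable ?_
  rw [MeasureTheory.ae_restrict_iff' measurableSet_Ioc]
  refine Filter.Eventually.of_forall fun u hu => ?_
  obtain ⟨hu0, hu1⟩ := hu
  have hrp : (0:ℝ) < u ^ (-(1/2) : ℝ) := Real.rpow_pos_of_pos hu0 _
  have h1 : Real.log (u ^ (-(1/2) : ℝ)) ≤ u ^ (-(1/2) : ℝ) - 1 :=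
    Real.log_le_sub_one_of_pos hrp
  rw [Real.log_rpow hu0] at h1
  have hlogle : Real.log u ≤ 0 := Real.log_nonpos hu0.le hu1
  have hb : -Real.log u ≤ 2 * u ^ (-(1/2) : ℝ) := by nlinarith
  rw [Real.norm_eq_abs, Real.norm_eq_abs, abs_of_nonpos hlogle,
    abs_of_nonneg (by positivity)]
  exact hb

lemma integral_log_zero_one : ∫ u in (0:ℝ)..1, Real.log u = -1 := by
  have h := intervalIntegral.integral_eq_sub_of_hasDeriv_right_of_le
    (f := fun u : ℝ => u * Real.log u - u) (f' := Real.log) zero_le_one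
    ((Real.continuous_mul_log.sub continuous_id).continuousOn)
    (fun u hu => by
      have : HasDerivAt (fun u : ℝ => u * Real.log u - u) (Real.log u) u := by
        have h1 := Real.hasDerivAt_mul_log (ne_of_gt hu.1)
        exact (h1.sub (hasDerivAt_id' (x := u))).congr_deriv (by ring)
      exact this.hasDerivWithinAt)
    intervalIntegrable_log01
  simpa using h

theorem integral_log_inv_sub_eq (x : ℝ) (hx : x ∈ Set.Ioc (0:ℝ) 1) :
    ∫ z in (0:ℝ)..1, Real.logb 2 (x⁻¹ - z)
      = x⁻¹ * binEnt x - Real.logb 2 (Real.exp 1) := by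
  obtain ⟨hx0, hx1⟩ := hx
  set a : ℝ := x⁻¹ with ha
  have ha1 : 1 ≤ a := one_le_inv_iff₀.2 ⟨hx0, hx1⟩
  have hlog2 : Real.log 2 ≠ 0 := by
    exact ne_of_gt (Real.log_pos (by norm_num))
  have hstep1 : ∫ z in (0:ℝ)..1, Real.logb 2 (a - z)
      = (Real.log 2)⁻¹ * ∫ z in (0:ℝ)..1, Real.log (a - z) := by
    rw [← intervalIntegral.integral_const_mul]
    congr 1
    ext z
    rw [Real.logb, div_eq_inv_mul]
  have hstep2 : ∫ z in (0:ℝ)..1, Real.log (a - z) = ∫ u in (a-1)..a, Real.log u := by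
    simpa using intervalIntegral.integral_comp_sub_left (a := (0:ℝ)) (b := 1) Real.log a
  have hkey : ∫ u in (a-1)..a, Real.log u
      = a * Real.log a - (a - 1) * Real.log (a - 1) - 1 := by
    rcases eq_or_lt_of_le ha1 with h1 | h1
    · rw [← h1]
      simpa using integral_log_zero_one
    · rw [integral_log]
      ring
  have hexp : Real.logb 2 (Real.exp 1) = (Real.log 2)⁻¹ := by
    rw [Real.logb, Real.log_exp]
    exact one_div _
  rw [hstep1, hstep2, hkey, hexp]
  have hxne : x ≠ 0 := ne_of_gt hx0
  have hloga : Real.log a = -Real.log x := Real.log_inv x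
  rcases eq_or_lt_of_le hx1 with hx1' | hx1'
  · subst hx1'
    simp [binEnt, ha]
  · have h1x : (0:ℝ) < 1 - x := by linarith
    have hA : a - 1 = (1 - x) / x := by
      field_simp [ha]
      rw [ha, sub_mul, inv_mul_cancel₀ hxne, one_mul]
    have hlogA : Real.log (a - 1) = Real.log (1 - x) - Real.log x := by
      rw [hA, Real.log_div (ne_of_gt h1x) hxne]
    rw [hloga, hlogA, hA]
    simp only [binEnt, Real.logb, ha]
    field_simp
    ring
end

section
/- Define the loss function L(β) = H(φ)/φ - (β/φ)·H(φ/β) for β ∈ [φ, 1], with fixed φ ∈ (0,1]. Then L is monotonically decreasing in β, L(1) = 0, and L(β) ≥ 0 for all β ∈ [φ,1]. -/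
open Real

/-- key convexity inequality for `x * log x` -/
lemma key_convex (φ a b : ℝ) (hφ : 0 < φ) (ha : 0 ≤ a) (hab : a ≤ b) :
    (a + φ) * Real.log (a + φ) + b * Real.log b ≤
      a * Real.log a + (b + φ) * Real.log (b + φ) := by
  rcases eq_or_lt_of_le hab with rfl | hab
  · exact le_of_eq (by ring)
  · have hd : 0 < b + φ - a := by linarith
    set t : ℝ := (b - a) / (b + φ - a) with ht
    set s : ℝ := φ / (b + φ - a) with hs
    have hts : s + t = 1 := by
      rw [hs, ht, ← add_div, div_eq_one_iff_eq hd.ne']; ring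
    have htnn : 0 ≤ t := div_nonneg (by linarith) hd.le
    have hsnn : 0 ≤ s := div_nonneg hφ.le hd.le
    have hmem1 : (a : ℝ) ∈ Set.Ici (0:ℝ) := ha
    have hmem2 : (b + φ : ℝ) ∈ Set.Ici (0:ℝ) := by simp; linarith
    have h1 := Real.convexOn_mul_log.2 hmem1 hmem2 hsnn htnn hts
    have h2 := Real.convexOn_mul_log.2 hmem1 hmem2 htnn hsnn (by linarith)
    have e1 : s • a + t • (b + φ) = b := by
      simp only [smul_eq_mul, hs, ht]; field_simp; ring
    have e2 : t • a + s • (b + φ) = a + φ := by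
      simp only [smul_eq_mul, hs, ht]; field_simp; ring
    rw [e1] at h1
    rw [e2] at h2
    simp only [smul_eq_mul] at h1 h2
    have hsum := add_le_add h2 h1
    have hr : t * (a * Real.log a) + s * ((b + φ) * Real.log (b + φ)) +
        (s * (a * Real.log a) + t * ((b + φ) * Real.log (b + φ))) =
        (s + t) * (a * Real.log a + (b + φ) * Real.log (b + φ)) := by ring
    rw [hr, hts, one_mul] at hsum
    linarith

/-- rewrite `β * binEnt (φ/β)` -/
lemma binEnt_scaled (φ β : ℝ) (hφ : 0 < φ) (hβ : φ ≤ β) :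
    β * binEnt (φ / β) =
      (β * Real.log β - (β - φ) * Real.log (β - φ) - φ * Real.log φ) / Real.log 2 := by
  have hβ0 : 0 < β := lt_of_lt_of_le hφ hβ
  rcases eq_or_lt_of_le hβ with rfl | hlt
  · have h1 : φ / φ = 1 := div_self hβ0.ne'
    rw [h1]
    simp [binEnt]
  · have h1 : (1 : ℝ) - φ / β = (β - φ) / β := by field_simp
    have hbφ : 0 < β - φ := by linarith
    simp only [binEnt, Real.logb, h1]
    rw [Real.log_div hφ.ne' hβ0.ne', Real.log_div hbφ.ne' hβ0.ne']
    field_simp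
    ring

theorem loss_monotone_nonneg (φ : ℝ) (hφ : φ ∈ Set.Ioc (0:ℝ) 1) :
    AntitoneOn (fun β : ℝ => binEnt φ / φ - (β / φ) * binEnt (φ / β)) (Set.Icc φ 1)
    ∧ binEnt φ / φ - (1 / φ) * binEnt (φ / 1) = 0
    ∧ ∀ β ∈ Set.Icc φ 1, 0 ≤ binEnt φ / φ - (β / φ) * binEnt (φ / β) := by
  obtain ⟨hφ0, hφ1⟩ := hφ
  have hlog2 : 0 < Real.log 2 := Real.log_pos (by norm_num)
  have hmono : AntitoneOn (fun β : ℝ => binEnt φ / φ - (β / φ) * binEnt (φ / β))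
      (Set.Icc φ 1) := by
    intro x hx y hy hxy
    simp only
    have hx' : φ ≤ x := hx.1
    have hy' : φ ≤ y := hy.1
    have hG : x * binEnt (φ / x) ≤ y * binEnt (φ / y) := by
      rw [binEnt_scaled φ x hφ0 hx', binEnt_scaled φ y hφ0 hy']
      apply div_le_div_of_nonneg_right ?_ hlog2.le |>.trans_eq rfl
      have := key_convex φ (x - φ) (y - φ) hφ0 (by linarith) (by linarith)
      have ex : x - φ + φ = x := by ring
      have ey : y - φ + φ = y := by ring
      rw [ex, ey] at this
      linarith
    have : x / φ * binEnt (φ / x) ≤ y / φ * binEnt (φ / y) := by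
      rw [div_mul_eq_mul_div, div_mul_eq_mul_div]
      exact div_le_div_of_nonneg_right hG hφ0.le |>.trans_eq rfl
    linarith
  have hone : binEnt φ / φ - (1 / φ) * binEnt (φ / 1) = 0 := by
    rw [div_one, one_div, inv_mul_eq_div, sub_self]
  refine ⟨hmono, hone, ?_⟩
  intro β hβ
  have h1 : (1:ℝ) ∈ Set.Icc φ 1 := ⟨hφ1, le_refl 1⟩
  have := hmono hβ h1 hβ.2
  simp only at this
  calc (0:ℝ) = binEnt φ / φ - (1 / φ) * binEnt (φ / 1) := hone.symm
    _ ≤ _ := this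
end
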